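/- Let h > 0 and let f : ℝ → ℝ be continuously differentiable on (-h, h) with f(0) = 0. Then ∫_{-h}^{h} t^{-2} |f(t)|^2 dt ≤ 4 ∫_{-h}^{h} |f'(t)|^2 dt. -/

import Mathlib

open MeasureTheory Set Filter Topology
open scoped ENNReal

lemma hardy_half (h : ℝ) (hh : 0 < h) (f f' : ℝ → ℝ)
    (hd : ∀ t ∈ Ico 0 h, HasDerivAt f (f' t) t)
    (hc : ContinuousOn f' (Ico 0 h))
    (hf0 : f 0 = 0) :
    ∫⁻ t in Ioo 0 h, ENNReal.ofReal (f t ^ 2 / t ^ 2) ≤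
      4 * ∫⁻ t in Ioo 0 h, ENNReal.ofReal (f' t ^ 2) := by
  set R : ℝ≥0∞ := ∫⁻ t in Ioo 0 h, ENNReal.ofReal (f' t ^ 2) with hR
  have hfc : ContinuousOn f (Ico 0 h) := fun t ht => (hd t ht).continuousAt.continuousWithinAt
  -- Step 1: finite-interval bound
  have key : ∀ δ b : ℝ, 0 < δ → δ ≤ b → b < h →
      ∫⁻ t in Ioo δ b, ENNReal.ofReal (f t ^ 2 / t ^ 2) ≤
        4 * R + ENNReal.ofReal (2 * f δ ^ 2 / δ) := by
    intro δ b hδ hδb hb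
    have hsub : Icc δ b ⊆ Ico 0 h := fun t ht => ⟨le_trans hδ.le ht.1, lt_of_le_of_lt ht.2 hb⟩
    have htpos : ∀ t ∈ Icc δ b, 0 < t := fun t ht => lt_of_lt_of_le hδ ht.1
    have hfc' : ContinuousOn f (Icc δ b) := hfc.mono hsub
    have hc' : ContinuousOn f' (Icc δ b) := hc.mono hsub
    have hcont1 : ContinuousOn (fun t => f t ^ 2 / t ^ 2) (Icc δ b) :=
      (hfc'.pow 2).div (continuousOn_id.pow 2) (fun t ht => pow_ne_zero _ (htpos t ht).ne')
    have hcont2 : ContinuousOn (fun t => f' t ^ 2) (Icc δ b) := hc'.pow 2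
    have hcont3 : ContinuousOn (fun t => 2 * f t * f' t / t) (Icc δ b) :=
      ((continuousOn_const.mul hfc').mul hc').div continuousOn_id (fun t ht => (htpos t ht).ne')
    have huIcc : uIcc δ b = Icc δ b := uIcc_of_le hδb
    have i1 : IntervalIntegrable (fun t => f t ^ 2 / t ^ 2) volume δ b :=
      (huIcc ▸ hcont1).intervalIntegrable
    have i2 : IntervalIntegrable (fun t => f' t ^ 2) volume δ b :=
      (huIcc ▸ hcont2).intervalIntegrable
    have i3 : IntervalIntegrable (fun t => 2 * f t * f' t / t) volume δ b :=
      (huIcc ▸ hcont3).intervalIntegrable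
    -- FTC for g(t) = f(t)^2 / t
    have hg : ∀ t ∈ uIcc δ b, HasDerivAt (fun t => f t ^ 2 / t)
        (2 * f t * f' t / t - f t ^ 2 / t ^ 2) t := by
      intro t ht
      rw [huIcc] at ht
      have ht0 : t ≠ 0 := (htpos t ht).ne'
      have h1 : HasDerivAt (fun t => f t ^ 2) (2 * f t * f' t) t := by
        have := (hd t (hsub ht)).pow 2
        refine this.congr_deriv ?_
        ring
      have h2 := h1.div (hasDerivAt_id t) ht0
      refine h2.congr_deriv ?_
      simp only [id_eq]
      field_simp
    have ftc := intervalIntegral.integral_eq_sub_of_hasDerivAt hg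
      ((huIcc ▸ (hcont3.sub hcont1)).intervalIntegrable)
    rw [intervalIntegral.integral_sub i3 i1] at ftc
    -- pointwise AM-GM and integration
    have hmono : (∫ t in δ..b, 2 * f t * f' t / t) ≤
        ∫ t in δ..b, ((1/2) * (f t ^ 2 / t ^ 2) + 2 * f' t ^ 2) := by
      refine intervalIntegral.integral_mono_on hδb i3
        ((i1.const_mul _).add (i2.const_mul _)) (fun t ht => ?_)
      have ht0 : (0:ℝ) < t := htpos t ht
      have e1 : 2 * f t * f' t / t = 2 * (f t / t) * f' t := by
        field_simp
      have e2 : (1/2) * (f t ^ 2 / t ^ 2) = (f t / t) ^ 2 / 2 := by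
        rw [div_pow]
        ring
      rw [e1, e2]
      nlinarith [sq_nonneg (f t / t - 2 * f' t)]
    rw [intervalIntegral.integral_add (i1.const_mul _) (i2.const_mul _),
      intervalIntegral.integral_const_mul, intervalIntegral.integral_const_mul] at hmono
    have hb0 : (0:ℝ) ≤ f b ^ 2 / b := div_nonneg (sq_nonneg _) (lt_of_lt_of_le hδ hδb).le
    have hid : 2 * f δ ^ 2 / δ = 2 * (f δ ^ 2 / δ) := by ring
    have hreal : (∫ t in δ..b, f t ^ 2 / t ^ 2) ≤
        4 * (∫ t in δ..b, f' t ^ 2) + 2 * f δ ^ 2 / δ := by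
      rw [hid]; linarith
    -- convert to lintegrals
    have nn1 : 0 ≤ᵐ[volume.restrict (Ioc δ b)] fun t => f t ^ 2 / t ^ 2 :=
      ae_of_all _ fun t => by positivity
    have nn2 : 0 ≤ᵐ[volume.restrict (Ioc δ b)] fun t => f' t ^ 2 :=
      ae_of_all _ fun t => sq_nonneg _
    have int1 : IntegrableOn (fun t => f t ^ 2 / t ^ 2) (Ioc δ b) :=
      (hcont1.integrableOn_compact isCompact_Icc).mono_set Ioc_subset_Icc_self
    have int2 : IntegrableOn (fun t => f' t ^ 2) (Ioc δ b) :=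
      (hcont2.integrableOn_compact isCompact_Icc).mono_set Ioc_subset_Icc_self
    have e1 : ENNReal.ofReal (∫ t in δ..b, f t ^ 2 / t ^ 2)
        = ∫⁻ t in Ioo δ b, ENNReal.ofReal (f t ^ 2 / t ^ 2) := by
      rw [intervalIntegral.integral_of_le hδb,
        ofReal_integral_eq_lintegral_ofReal int1 nn1, restrict_Ioo_eq_restrict_Ioc]
    have e2 : ENNReal.ofReal (∫ t in δ..b, f' t ^ 2)
        = ∫⁻ t in Ioo δ b, ENNReal.ofReal (f' t ^ 2) := by
      rw [intervalIntegral.integral_of_le hδb,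
        ofReal_integral_eq_lintegral_ofReal int2 nn2, restrict_Ioo_eq_restrict_Ioc]
    calc ∫⁻ t in Ioo δ b, ENNReal.ofReal (f t ^ 2 / t ^ 2)
        = ENNReal.ofReal (∫ t in δ..b, f t ^ 2 / t ^ 2) := e1.symm
      _ ≤ ENNReal.ofReal (4 * (∫ t in δ..b, f' t ^ 2) + 2 * f δ ^ 2 / δ) :=
          ENNReal.ofReal_le_ofReal hreal
      _ ≤ ENNReal.ofReal (4 * (∫ t in δ..b, f' t ^ 2)) + ENNReal.ofReal (2 * f δ ^ 2 / δ) :=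
          ENNReal.ofReal_add_le
      _ ≤ 4 * R + ENNReal.ofReal (2 * f δ ^ 2 / δ) := by
          refine add_le_add_left ?_ _
          rw [ENNReal.ofReal_mul (by norm_num : (0:ℝ) ≤ 4), e2]
          simp only [ENNReal.ofReal_ofNat]
          exact mul_le_mul_right (lintegral_mono_set (Ioo_subset_Ioo hδ.le hb.le)) _
  -- Step 2: take limits
  set δs : ℕ → ℝ := fun n => h / (n + 3) with hδs
  set bs : ℕ → ℝ := fun n => h - h / (n + 3) with hbs
  have hδpos : ∀ n, 0 < δs n := fun n => div_pos hh (by positivity)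
  have hδh : ∀ n, δs n ≤ h / 2 := by
    intro n
    rw [hδs, div_le_div_iff₀ (by positivity) two_pos]
    nlinarith [hh.le, (Nat.cast_nonneg n : (0:ℝ) ≤ (n:ℝ))]
  have hδb : ∀ n, δs n ≤ bs n := fun n => by
    have h1 := hδh n
    have h2 := hδpos n
    simp only [hδs, hbs] at *
    linarith
  have hbh : ∀ n, bs n < h := fun n => by
    have := hδpos n
    simp only [hδs, hbs] at *
    linarith
  have hδ0 : Tendsto δs atTop (𝓝 0) := by
    have h1 : Tendsto (fun n : ℕ => h / (n : ℝ)) atTop (𝓝 0) :=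
      tendsto_const_div_atTop_nhds_zero_nat h
    have h2 := h1.comp (tendsto_add_atTop_nat 3)
    have h3 : δs = (fun n : ℕ => h / (n : ℝ)) ∘ (fun n => n + 3) := by
      funext n
      simp only [hδs, Function.comp_apply]
      push_cast
      ring
    rw [h3]
    exact h2
  have hbsh : Tendsto bs atTop (𝓝 h) := by
    have := tendsto_const_nhds (x := h) (f := atTop (α := ℕ)) |>.sub hδ0
    simpa using this
  -- AE cover
  have hcov : AECover (volume.restrict (Ioo 0 h)) atTop (fun n => Ioo (δs n) (bs n)) := by
    refine ⟨?_, fun n => measurableSet_Ioo⟩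
    filter_upwards [ae_restrict_mem measurableSet_Ioo] with x hx
    have h1 : ∀ᶠ n in atTop, δs n < x := hδ0.eventually_lt_const hx.1
    have h2 : ∀ᶠ n in atTop, x < bs n := hbsh.eventually_const_lt hx.2
    filter_upwards [h1, h2] with n ha hb
    exact ⟨ha, hb⟩
  -- measurability
  have hfm : AEMeasurable f (volume.restrict (Ioo 0 h)) :=
    (hfc.mono Ioo_subset_Ico_self).aemeasurable measurableSet_Ioo
  have hgm : AEMeasurable (fun t => ENNReal.ofReal (f t ^ 2 / t ^ 2))
      (volume.restrict (Ioo 0 h)) :=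
    ((hfm.pow_const 2).div (aemeasurable_id.pow_const 2)).ennreal_ofReal
  have hLt : Tendsto (fun n => ∫⁻ t in Ioo (δs n) (bs n), ENNReal.ofReal (f t ^ 2 / t ^ 2))
      atTop (𝓝 (∫⁻ t in Ioo 0 h, ENNReal.ofReal (f t ^ 2 / t ^ 2))) := by
    have := hcov.lintegral_tendsto_of_nat hgm
    refine Tendsto.congr (fun n => ?_) this
    rw [Measure.restrict_restrict measurableSet_Ioo]
    congr 1
    rw [inter_eq_self_of_subset_left]
    exact Ioo_subset_Ioo (hδpos n).le (hbh n).le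
  -- the error term tends to zero
  have hslope : Tendsto (fun n => f (δs n) / δs n) atTop (𝓝 (f' 0)) := by
    have hD : HasDerivAt f (f' 0) 0 := hd 0 ⟨le_refl 0, hh⟩
    have hs := hasDerivAt_iff_tendsto_slope.mp hD
    have hseq : Tendsto δs atTop (𝓝[≠] (0:ℝ)) :=
      tendsto_nhdsWithin_of_tendsto_nhds_of_eventually_within _ hδ0
        (Eventually.of_forall fun n => (hδpos n).ne')
    have := hs.comp hseq
    refine Tendsto.congr (fun n => ?_) this
    simp [slope_def_field, hf0]
  have hc0 : Tendsto (fun n => ENNReal.ofReal (2 * f (δs n) ^ 2 / δs n)) atTop (𝓝 0) := by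
    have hreal : Tendsto (fun n => 2 * f (δs n) ^ 2 / δs n) atTop (𝓝 0) := by
      have h1 := ((hslope.mul hslope).mul hδ0).const_mul (2:ℝ)
      have h2 : Tendsto (fun n => 2 * (f (δs n) / δs n * (f (δs n) / δs n) * δs n))
          atTop (𝓝 0) := by simpa using h1
      refine Tendsto.congr (fun n => ?_) h2
      have := (hδpos n).ne'
      field_simp
    have := ENNReal.tendsto_ofReal hreal
    simpa using this
  have hbound : Tendsto (fun n => 4 * R + ENNReal.ofReal (2 * f (δs n) ^ 2 / δs n))
      atTop (𝓝 (4 * R + 0)) := tendsto_const_nhds.add hc0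
  have := le_of_tendsto_of_tendsto' hLt hbound
    (fun n => key (δs n) (bs n) (hδpos n) (hδb n) (hbh n))
  simpa using this

theorem hardy_type_inequality (h : ℝ) (hh : 0 < h) (f f' : ℝ → ℝ)
    (hderiv : ∀ t ∈ Ioo (-h) h, HasDerivAt f (f' t) t)
    (hcont : ContinuousOn f' (Ioo (-h) h))
    (hf0 : f 0 = 0) :
    ∫⁻ t in Ioo (-h) h, ENNReal.ofReal (|f t| ^ 2 / t ^ 2) ≤
      4 * ∫⁻ t in Ioo (-h) h, ENNReal.ofReal (|f' t| ^ 2) := by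
  simp only [sq_abs]
  have hneg0 : (-h : ℝ) < 0 := neg_lt_zero.mpr hh
  -- splitting lemma
  have split : ∀ F : ℝ → ℝ≥0∞, ∫⁻ t in Ioo (-h) h, F t
      = (∫⁻ t in Ioo (-h) 0, F t) + ∫⁻ t in Ioo 0 h, F t := by
    intro F
    have hset : Ioo (-h) 0 ∪ Ioo 0 h = Ioo (-h) h \ {0} := by
      ext x
      simp only [mem_union, mem_Ioo, mem_diff, mem_singleton_iff]
      constructor
      · rintro (⟨h1, h2⟩ | ⟨h1, h2⟩)
        · exact ⟨⟨h1, by linarith⟩, h2.ne⟩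
        · exact ⟨⟨by linarith, h2⟩, h1.ne'⟩
      · rintro ⟨⟨h1, h2⟩, h3⟩
        rcases lt_or_gt_of_ne h3 with hx | hx
        · exact Or.inl ⟨h1, hx⟩
        · exact Or.inr ⟨hx, h2⟩
    have hae : (Ioo (-h) 0 ∪ Ioo 0 h : Set ℝ) =ᵐ[volume] Ioo (-h) h := by
      rw [hset]
      exact diff_null_ae_eq_self (by simp)
    have hdisj : Disjoint (Ioo (-h) 0 : Set ℝ) (Ioo 0 h) := by
      refine Set.disjoint_left.mpr ?_
      rintro x ⟨_, h2⟩ ⟨h3, _⟩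
      exact absurd h3 (not_lt.mpr h2.le)
    rw [← Measure.restrict_congr_set hae, lintegral_union measurableSet_Ioo hdisj]
  -- positive half
  have hpos := hardy_half h hh f f'
    (fun t ht => hderiv t ⟨lt_of_lt_of_le hneg0 ht.1, ht.2⟩)
    (hcont.mono (fun t ht => ⟨lt_of_lt_of_le hneg0 ht.1, ht.2⟩)) hf0
  -- negative half via reflection
  have hmem : ∀ t ∈ Ico 0 h, -t ∈ Ioo (-h) h := by
    intro t ht
    constructor
    · linarith [ht.2]
    · linarith [ht.1, hh]
  have hgd : ∀ t ∈ Ico 0 h, HasDerivAt (fun s => f (-s)) (-f' (-t)) t := by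
    intro t ht
    have h1 := (hderiv (-t) (hmem t ht)).comp t (hasDerivAt_neg t)
    have h2 : -f' (-t) = f' (-t) * (-1) := by ring
    rw [h2]
    exact h1
  have hgc : ContinuousOn (fun t => -f' (-t)) (Ico 0 h) :=
    (hcont.comp continuous_neg.continuousOn (fun t ht => hmem t ht)).neg
  have hg0 : f (-(0:ℝ)) = 0 := by simpa using hf0
  have hneg := hardy_half h hh (fun s => f (-s)) (fun s => -f' (-s)) hgd hgc hg0
  -- transfer the reflected integrals
  have mp : MeasurePreserving (fun t : ℝ => -t) volume volume :=
    Measure.measurePreserving_neg volume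
  have emb : MeasurableEmbedding (fun t : ℝ => -t) :=
    (MeasurableEquiv.neg ℝ).measurableEmbedding
  have hpre : (fun t : ℝ => -t) ⁻¹' Ioo (-h) 0 = Ioo 0 h := by
    ext x
    simp only [mem_preimage, mem_Ioo]
    constructor <;> intro hx <;> exact ⟨by linarith [hx.1, hx.2], by linarith [hx.1, hx.2]⟩
  have etrans1 : ∫⁻ t in Ioo (-h) 0, ENNReal.ofReal (f t ^ 2 / t ^ 2)
      = ∫⁻ t in Ioo 0 h, ENNReal.ofReal (f (-t) ^ 2 / t ^ 2) := by
    rw [← mp.setLIntegral_comp_preimage_emb emb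
      (fun t => ENNReal.ofReal (f t ^ 2 / t ^ 2)) (Ioo (-h) 0), hpre]
    refine lintegral_congr fun a => ?_
    rw [neg_sq]
  have etrans2 : ∫⁻ t in Ioo (-h) 0, ENNReal.ofReal (f' t ^ 2)
      = ∫⁻ t in Ioo 0 h, ENNReal.ofReal ((-f' (-t)) ^ 2) := by
    rw [← mp.setLIntegral_comp_preimage_emb emb
      (fun t => ENNReal.ofReal (f' t ^ 2)) (Ioo (-h) 0), hpre]
    refine lintegral_congr fun a => ?_
    rw [neg_sq]
  have hnegside : ∫⁻ t in Ioo (-h) 0, ENNReal.ofReal (f t ^ 2 / t ^ 2)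
      ≤ 4 * ∫⁻ t in Ioo (-h) 0, ENNReal.ofReal (f' t ^ 2) := by
    rw [etrans1, etrans2]
    exact hneg
  rw [split, split, mul_add]
  exact add_le_add hnegside hpos
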